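/- Let 𝔽₂ be the field with two elements, t an indeterminate, L = 𝔽₂(t) and k = 𝔽₂(t²). Let A = k[U,V,W]/(W² + U + t²U² + V²/t²). Then A ⊗_k L is isomorphic, as an L-algebra, to a polynomial ring in two variables over L; i.e., A is an 𝔸²-form with respect to L over k. -/

import Mathlib

open MvPolynomial TensorProduct

set_option maxHeartbeats 1000000 in
set_option synthInstance.maxHeartbeats 100000 in
theorem stmt6 (L : Type) [Field L] [Algebra (ZMod 2) L] (t : L)
    (htr : Transcendental (ZMod 2) t)
    (htL : IntermediateField.adjoin (ZMod 2) ({t} : Set L) = ⊤)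
    (k : Type) [Field k] [Algebra (ZMod 2) k] [Algebra k L] [IsScalarTower (ZMod 2) k L]
    (t2 : k) (ht2 : algebraMap k L t2 = t ^ 2)
    (hk : IntermediateField.adjoin (ZMod 2) ({t2} : Set k) = ⊤)
    (I : Ideal (MvPolynomial (Fin 3) k))
    (hI : I = Ideal.span
      {(MvPolynomial.X 2 : MvPolynomial (Fin 3) k) ^ 2 + MvPolynomial.X 0
        + MvPolynomial.C t2 * MvPolynomial.X 0 ^ 2
        + MvPolynomial.C t2⁻¹ * MvPolynomial.X 1 ^ 2}) :
    Nonempty ((TensorProduct k L (MvPolynomial (Fin 3) k ⧸ I))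
      ≃ₐ[L] MvPolynomial (Fin 2) L) := by
  classical
  subst hI
  set g : MvPolynomial (Fin 3) k :=
    (X 2 : MvPolynomial (Fin 3) k) ^ 2 + X 0 + C t2 * X 0 ^ 2 + C t2⁻¹ * X 1 ^ 2 with hg
  -- characteristic 2 facts
  haveI : CharP L 2 := charP_of_injective_ringHom (algebraMap (ZMod 2) L).injective 2
  haveI : CharP (MvPolynomial (Fin 2) L) 2 := charP_of_injective_ringHom (C_injective (Fin 2) L) 2
  have h2M : (2 : MvPolynomial (Fin 2) L) = 0 := CharTwo.two_eq_zero
  -- nontriviality of Q and T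
  have hIneTop : Ideal.span {g} ≠ ⊤ := by
    intro h
    have h1 : (1 : MvPolynomial (Fin 3) k) ∈ Ideal.span {g} := h ▸ Submodule.mem_top
    have hu : IsUnit g := isUnit_of_dvd_one (Ideal.mem_span_singleton.mp h1)
    have := hu.map (eval (fun _ => (0 : k)))
    simp [hg] at this
  haveI : Nontrivial (MvPolynomial (Fin 3) k ⧸ Ideal.span {g}) := Ideal.Quotient.nontrivial_iff.mpr hIneTop
  haveI : Nontrivial (TensorProduct k L (MvPolynomial (Fin 3) k ⧸ Ideal.span {g})) :=
    Module.FaithfullyFlat.lTensor_nontrivial k L _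
  haveI : CharP (TensorProduct k L (MvPolynomial (Fin 3) k ⧸ Ideal.span {g})) 2 :=
    charP_of_injective_ringHom (algebraMap L _).injective 2
  have h2T : (2 : TensorProduct k L (MvPolynomial (Fin 3) k ⧸ Ideal.span {g})) = 0 := CharTwo.two_eq_zero
  have ht0 : t ≠ 0 := fun h => htr (h ▸ isAlgebraic_zero)
  -- the forward map
  have hCt2 : algebraMap k (MvPolynomial (Fin 2) L) t2 = C t ^ 2 := by
    rw [IsScalarTower.algebraMap_apply k L (MvPolynomial (Fin 2) L), ht2, MvPolynomial.algebraMap_eq, map_pow]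
  have hCt2i : algebraMap k (MvPolynomial (Fin 2) L) t2⁻¹ = C t⁻¹ ^ 2 := by
    rw [IsScalarTower.algebraMap_apply k L (MvPolynomial (Fin 2) L), map_inv₀, ht2, ← inv_pow,
      MvPolynomial.algebraMap_eq, map_pow]
  set φ : MvPolynomial (Fin 3) k →ₐ[k] MvPolynomial (Fin 2) L :=
    aeval ![(X 1 : MvPolynomial (Fin 2) L) ^ 2, X 0, X 1 + C t * X 1 ^ 2 + C t⁻¹ * X 0] with hφdef
  have hφg : φ g = 0 := by
    simp only [hφdef, hg, map_add, map_mul, map_pow, aeval_X, aeval_C,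
      Matrix.cons_val_zero, Matrix.cons_val_one, Matrix.head_cons,
      Matrix.cons_val_two, Matrix.tail_cons, hCt2, hCt2i]
    linear_combination (X 1 ^ 2 + (C t * X 1 ^ 2) ^ 2 + (C t⁻¹ * X 0) ^ 2
      + X 1 * (C t * X 1 ^ 2) + X 1 * (C t⁻¹ * X 0)
      + (C t * X 1 ^ 2) * (C t⁻¹ * X 0) : MvPolynomial (Fin 2) L) * h2M
  have hvan : ∀ a ∈ Ideal.span {g}, φ a = 0 := by
    intro a ha
    obtain ⟨c, rfl⟩ := Ideal.mem_span_singleton'.mp ha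
    rw [map_mul, hφg, mul_zero]
  set φbar : (MvPolynomial (Fin 3) k ⧸ Ideal.span {g}) →ₐ[k] MvPolynomial (Fin 2) L := Ideal.Quotient.liftₐ (Ideal.span {g}) φ hvan with hφbar
  set F : TensorProduct k L (MvPolynomial (Fin 3) k ⧸ Ideal.span {g}) →ₐ[L] MvPolynomial (Fin 2) L :=
    Algebra.TensorProduct.lift (Algebra.ofId L (MvPolynomial (Fin 2) L)) φbar (fun _ _ => Commute.all _ _) with hF
  set mk : MvPolynomial (Fin 3) k →+* MvPolynomial (Fin 3) k ⧸ Ideal.span {g} := Ideal.Quotient.mk (Ideal.span {g}) with hmk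
  set G : MvPolynomial (Fin 2) L →ₐ[L] TensorProduct k L (MvPolynomial (Fin 3) k ⧸ Ideal.span {g}) :=
    aeval ![(1 : L) ⊗ₜ[k] mk (X 1),
      (1 : L) ⊗ₜ[k] mk (X 2) + t ⊗ₜ[k] mk (X 0) + t⁻¹ ⊗ₜ[k] mk (X 1)] with hG
  -- the relation in the tensor product
  have halg : ∀ c : k, @algebraMap k (TensorProduct k L (MvPolynomial (Fin 3) k ⧸ Ideal.span {g})) _ Algebra.TensorProduct.instSemiring Algebra.TensorProduct.leftAlgebra c
      = (algebraMap k L c) ⊗ₜ[k] (1 : MvPolynomial (Fin 3) k ⧸ Ideal.span {g}) := by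
    intro c
    rw [IsScalarTower.algebraMap_apply k L
      (TensorProduct k L (MvPolynomial (Fin 3) k ⧸ Ideal.span {g})),
      Algebra.TensorProduct.algebraMap_apply, Algebra.algebraMap_self, RingHom.id_apply]
  have hrel0 : ((1 : L) ⊗ₜ[k] mk (X 2)) ^ 2 + (1 : L) ⊗ₜ[k] mk (X 0)
      + ((t ^ 2) ⊗ₜ[k] (1 : MvPolynomial (Fin 3) k ⧸ Ideal.span {g})) * ((1 : L) ⊗ₜ[k] mk (X 0)) ^ 2
      + ((t ^ 2)⁻¹ ⊗ₜ[k] (1 : MvPolynomial (Fin 3) k ⧸ Ideal.span {g})) * ((1 : L) ⊗ₜ[k] mk (X 1)) ^ 2 = 0 := by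
    have h0 : (Ideal.Quotient.mkₐ k (Ideal.span {g})) g = 0 := by
      simpa using Ideal.Quotient.eq_zero_iff_mem.mpr (Ideal.subset_span rfl)
    have h1 : (Algebra.TensorProduct.includeRight.comp
        (Ideal.Quotient.mkₐ k (Ideal.span {g})))
          ((X 2 : MvPolynomial (Fin 3) k) ^ 2 + X 0 + C t2 * X 0 ^ 2 + C t2⁻¹ * X 1 ^ 2)
        = (0 : TensorProduct k L (MvPolynomial (Fin 3) k ⧸ Ideal.span {g})) := by
      rw [← hg, AlgHom.comp_apply, h0, map_zero]
    simp only [map_add, map_mul, map_pow, MvPolynomial.algHom_C] at h1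
    simp only [AlgHom.comp_apply, Ideal.Quotient.mkₐ_eq_mk,
      Algebra.TensorProduct.includeRight_apply, ← hmk, halg, map_inv₀, ht2] at h1
    exact h1
  have hsq : (((1 : L) ⊗ₜ[k] mk (X 2) + t ⊗ₜ[k] mk (X 0) + t⁻¹ ⊗ₜ[k] mk (X 1)) :
      TensorProduct k L (MvPolynomial (Fin 3) k ⧸ Ideal.span {g})) ^ 2
      = (1 : L) ⊗ₜ[k] mk (X 0) := by
    have e : ∀ x y z : TensorProduct k L (MvPolynomial (Fin 3) k ⧸ Ideal.span {g}),
        (x + y + z) ^ 2 = x ^ 2 + y ^ 2 + z ^ 2 + 2 * (x * y + x * z + y * z) := by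
      intros; ring
    rw [e, h2T]
    have hs1 : (t ⊗ₜ[k] mk (X 0) : TensorProduct k L (MvPolynomial (Fin 3) k ⧸ Ideal.span {g}))
        = (t ⊗ₜ[k] 1) * ((1 : L) ⊗ₜ[k] mk (X 0)) := by
      rw [Algebra.TensorProduct.tmul_mul_tmul, mul_one, one_mul]
    have hs2 : (t⁻¹ ⊗ₜ[k] mk (X 1) : TensorProduct k L (MvPolynomial (Fin 3) k ⧸ Ideal.span {g}))
        = (t⁻¹ ⊗ₜ[k] 1) * ((1 : L) ⊗ₜ[k] mk (X 1)) := by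
      rw [Algebra.TensorProduct.tmul_mul_tmul, mul_one, one_mul]
    have hp1 : ((t ⊗ₜ[k] (1 : MvPolynomial (Fin 3) k ⧸ Ideal.span {g})) :
        TensorProduct k L (MvPolynomial (Fin 3) k ⧸ Ideal.span {g})) ^ 2 = (t ^ 2) ⊗ₜ[k] 1 := by
      rw [Algebra.TensorProduct.tmul_pow, one_pow]
    have hp2 : ((t⁻¹ ⊗ₜ[k] (1 : MvPolynomial (Fin 3) k ⧸ Ideal.span {g})) :
        TensorProduct k L (MvPolynomial (Fin 3) k ⧸ Ideal.span {g})) ^ 2 = (t ^ 2)⁻¹ ⊗ₜ[k] 1 := by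
      rw [Algebra.TensorProduct.tmul_pow, one_pow, inv_pow]
    have hmp : ∀ x y : TensorProduct k L (MvPolynomial (Fin 3) k ⧸ Ideal.span {g}),
        (x * y) ^ 2 = x ^ 2 * y ^ 2 := fun x y => by ring
    rw [hs1, hs2, hmp, hmp, hp1, hp2]
    linear_combination hrel0 - ((1 : L) ⊗ₜ[k] mk (X 0)) * h2T
  -- helper computations
  have hφ0 : φ (X 0) = (X 1 : MvPolynomial (Fin 2) L) ^ 2 := by
    simp [hφdef]
  have hφ1 : φ (X 1) = (X 0 : MvPolynomial (Fin 2) L) := by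
    simp [hφdef]
  have hφ2 : φ (X 2) = (X 1 : MvPolynomial (Fin 2) L) + C t * X 1 ^ 2 + C t⁻¹ * X 0 := by
    simp only [hφdef, aeval_X, Matrix.cons_val_two, Matrix.tail_cons, Matrix.head_cons]
  have hG0 : G (X 0) = (1 : L) ⊗ₜ[k] mk (X 1) := by
    simp [hG]
  have hG1 : G (X 1) = (1 : L) ⊗ₜ[k] mk (X 2) + t ⊗ₜ[k] mk (X 0) + t⁻¹ ⊗ₜ[k] mk (X 1) := by
    simp [hG]
  have hGC : ∀ a : L, G (C a) = a ⊗ₜ[k] (1 : MvPolynomial (Fin 3) k ⧸ Ideal.span {g}) := by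
    intro a
    rw [hG, aeval_C, Algebra.TensorProduct.algebraMap_apply, Algebra.algebraMap_self,
      RingHom.id_apply]
  have hFt : ∀ (a : L) (p : MvPolynomial (Fin 3) k), F (a ⊗ₜ[k] mk p) = C a * φ p := by
    intro a p
    rw [hF, Algebra.TensorProduct.lift_tmul, hφbar, hmk, Ideal.Quotient.liftₐ_apply,
      Algebra.ofId_apply, MvPolynomial.algebraMap_eq]
    rfl
  have hF1 : ∀ p : MvPolynomial (Fin 3) k, F ((1 : L) ⊗ₜ[k] mk p) = φ p := by
    intro p
    rw [hFt, map_one, one_mul]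
  refine ⟨AlgEquiv.ofAlgHom F G ?_ ?_⟩
  · apply MvPolynomial.algHom_ext
    intro i
    fin_cases i
    · show F (G (X 0)) = (X 0 : MvPolynomial (Fin 2) L)
      rw [hG0, hF1, hφ1]
    · show F (G (X 1)) = (X 1 : MvPolynomial (Fin 2) L)
      rw [hG1, map_add, map_add, hF1, hFt, hFt, hφ0, hφ1, hφ2]
      linear_combination ((C t * X 1 ^ 2 + C t⁻¹ * X 0) : MvPolynomial (Fin 2) L) * h2M
  · apply Algebra.TensorProduct.ext
    · exact Subsingleton.elim _ _
    · apply Ideal.Quotient.algHom_ext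
      apply MvPolynomial.algHom_ext
      intro i
      fin_cases i
      · show G (F ((1 : L) ⊗ₜ[k] mk (X 0))) = (1 : L) ⊗ₜ[k] mk (X 0)
        rw [hF1, hφ0, sq, map_mul, ← sq (G (X 1)), hG1]
        exact hsq
      · show G (F ((1 : L) ⊗ₜ[k] mk (X 1))) = (1 : L) ⊗ₜ[k] mk (X 1)
        rw [hF1, hφ1, hG0]
      · show G (F ((1 : L) ⊗ₜ[k] mk (X 2))) = (1 : L) ⊗ₜ[k] mk (X 2)
        rw [hF1, hφ2, map_add, map_add, map_mul, map_mul, sq, map_mul, ← sq (G (X 1)), hG0, hG1, hsq, hGC, hGC]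
        simp only [Algebra.TensorProduct.tmul_mul_tmul, one_mul, mul_one]
        linear_combination (t ⊗ₜ[k] mk (X 0) + t⁻¹ ⊗ₜ[k] mk (X 1)) * h2T
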